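/- Let Y be a real normed space and f: ℝ → Y a phase-isometry (not necessarily surjective). Then there exists a continuous linear functional φ ∈ Y* with ‖φ‖ = 1 such that φ(f(t)) = t or φ(f(t)) = −t, for every t ∈ ℝ. -/

import Mathlib

open Filter Metric Set

section aux

variable {Y : Type*} [NormedAddCommGroup Y] [NormedSpace ℝ Y] {f : ℝ → Y}

lemma phase_double (t : ℝ) (h : ‖f t + f t‖ = |t + t|) : ‖f t‖ = |t| := by
  have h0 : f t + f t = (2 : ℝ) • f t := by rw [two_smul]
  rw [h0, norm_smul] at h
  have h2 : |t + t| = 2 * |t| := by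
    have h3 : t + t = (2:ℝ) * t := by ring
    rw [h3, abs_mul]; norm_num
  rw [h2] at h
  simp only [Real.norm_ofNat] at h
  linarith

lemma phase_norm (hf : ∀ s t : ℝ, ({‖f s + f t‖, ‖f s - f t‖} : Set ℝ) = {|s + t|, |s - t|})
    (t : ℝ) : ‖f t‖ = |t| := by
  have h := hf t t
  have h2 : |t + t| ∈ ({‖f t + f t‖, ‖f t - f t‖} : Set ℝ) := by
    rw [h]; exact Set.mem_insert _ _
  rcases h2 with h2 | h2
  · exact phase_double t h2.symm
  · have ht : t = 0 := by
      simp only [sub_self, norm_zero, Set.mem_singleton_iff, abs_eq_zero] at h2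
      linarith
    subst ht
    have h4 : ‖f 0 + f 0‖ ∈ ({|(0:ℝ) + 0|, |(0:ℝ) - 0|} : Set ℝ) := by
      rw [← h]; exact Set.mem_insert _ _
    simp only [add_zero, abs_zero, sub_zero, Set.mem_insert_iff, Set.mem_singleton_iff,
      or_self] at h4
    exact phase_double 0 (by simpa using h4)

lemma phase_neg (hf : ∀ s t : ℝ, ({‖f s + f t‖, ‖f s - f t‖} : Set ℝ) = {|s + t|, |s - t|})
    (t : ℝ) : f (-t) = f t ∨ f (-t) = -f t := by
  have h := hf t (-t)
  have h2 : (0:ℝ) ∈ ({‖f t + f (-t)‖, ‖f t - f (-t)‖} : Set ℝ) := by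
    rw [h]
    have h3 : |t + -t| = 0 := by simp
    rw [← h3]; exact Set.mem_insert _ _
  rcases h2 with h2 | h2
  · right
    exact eq_neg_of_add_eq_zero_right (norm_eq_zero.mp h2.symm)
  · left
    rw [Set.mem_singleton_iff] at h2
    exact (sub_eq_zero.mp (norm_eq_zero.mp h2.symm)).symm

/-- Key lemma: for each `s > 0`, there is a norming functional valid on `[-s, s]`. -/
lemma phase_key (hf : ∀ s t : ℝ, ({‖f s + f t‖, ‖f s - f t‖} : Set ℝ) = {|s + t|, |s - t|})
    {s : ℝ} (hs : 0 < s) :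
    ∃ φ : Y →L[ℝ] ℝ, ‖φ‖ = 1 ∧ ∀ t : ℝ, |t| ≤ s → φ (f t) = t ∨ φ (f t) = -t := by
  have hnorm := phase_norm hf
  have hfs : f s ≠ 0 := by
    intro h
    have h1 := hnorm s
    rw [h, norm_zero, abs_of_pos hs] at h1
    linarith
  obtain ⟨φ, hφ1, hφ2⟩ := exists_dual_vector ℝ (f s) (norm_ne_zero_iff.mpr hfs)
  have hφs : φ (f s) = s := by
    have h1 : (φ (f s) : ℝ) = ‖f s‖ := by exact_mod_cast hφ2
    rw [h1, hnorm s, abs_of_pos hs]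
  refine ⟨φ, hφ1, ?_⟩
  have main : ∀ t : ℝ, 0 ≤ t → t ≤ s → φ (f t) = t ∨ φ (f t) = -t := by
    intro t ht0 hts
    have habs : |φ (f t)| ≤ t := by
      calc |φ (f t)| ≤ ‖φ‖ * ‖f t‖ := φ.le_opNorm (f t)
        _ = t := by rw [hφ1, hnorm t, one_mul, abs_of_nonneg ht0]
    have hmem : |s - t| ∈ ({‖f s + f t‖, ‖f s - f t‖} : Set ℝ) := by
      rw [hf s t]; exact Set.mem_insert_of_mem _ rfl
    rw [abs_of_nonneg (by linarith : (0:ℝ) ≤ s - t)] at hmem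
    rcases hmem with hm | hm
    · right
      have h1 : φ (f s) + φ (f t) ≤ s - t := by
        calc φ (f s) + φ (f t) = φ (f s + f t) := by rw [map_add]
          _ ≤ |φ (f s + f t)| := le_abs_self _
          _ ≤ ‖φ‖ * ‖f s + f t‖ := φ.le_opNorm _
          _ = s - t := by rw [hφ1, one_mul, ← hm]
      rw [hφs] at h1
      have h2 := abs_le.mp habs
      linarith
    · left
      rw [Set.mem_singleton_iff] at hm
      have h1 : φ (f s) - φ (f t) ≤ s - t := by
        calc φ (f s) - φ (f t) = φ (f s - f t) := by rw [map_sub]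
          _ ≤ |φ (f s - f t)| := le_abs_self _
          _ ≤ ‖φ‖ * ‖f s - f t‖ := φ.le_opNorm _
          _ = s - t := by rw [hφ1, one_mul, ← hm]
      rw [hφs] at h1
      have h2 := abs_le.mp habs
      linarith
  intro t hts
  rcases le_or_gt 0 t with ht0 | ht0
  · exact main t ht0 (by rwa [abs_of_nonneg ht0] at hts)
  · have h1 : φ (f (-t)) = -t ∨ φ (f (-t)) = - -t :=
      main (-t) (by linarith) (by rwa [abs_of_neg ht0] at hts)
    rcases phase_neg hf (-t) with h2 | h2 <;> rw [neg_neg] at h2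
    · rw [h2]
      rcases h1 with h | h
      · right; exact h
      · left; rw [h, neg_neg]
    · rw [h2, map_neg]
      rcases h1 with h | h
      · left; rw [h]; ring
      · right; rw [h]; ring

end aux

theorem stmt_5 {Y : Type*} [NormedAddCommGroup Y] [NormedSpace ℝ Y] (f : ℝ → Y)
    (hf : ∀ s t : ℝ, ({‖f s + f t‖, ‖f s - f t‖} : Set ℝ) = {|s + t|, |s - t|}) :
    ∃ φ : Y →L[ℝ] ℝ, ‖φ‖ = 1 ∧ ∀ t : ℝ, φ (f t) = t ∨ φ (f t) = -t := by
  have hchoice : ∀ n : ℕ, ∃ φ : Y →L[ℝ] ℝ, ‖φ‖ = 1 ∧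
      ∀ t : ℝ, |t| ≤ (n + 1 : ℝ) → φ (f t) = t ∨ φ (f t) = -t := fun n =>
    phase_key hf (by positivity)
  choose φn hφn1 hφn2 using hchoice
  let ψ : ℕ → WeakDual ℝ Y := fun n => StrongDual.toWeakDual (φn n)
  have hK : IsCompact (WeakDual.toStrongDual ⁻¹' closedBall (0 : StrongDual ℝ Y) 1) :=
    WeakDual.isCompact_closedBall (𝕜 := ℝ) (E := Y) 0 1
  have hmem : ∀ n, ψ n ∈ WeakDual.toStrongDual ⁻¹' closedBall (0 : StrongDual ℝ Y) 1 := by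
    intro n
    simp only [Set.mem_preimage, mem_closedBall, dist_zero_right]
    exact le_of_eq (hφn1 n)
  obtain ⟨x, hx, hcl⟩ := hK.exists_mapClusterPt (f := atTop) (u := ψ)
    (le_principal_iff.mpr (mem_map.mpr (Eventually.of_forall hmem)))
  have hprop : ∀ t : ℝ, (WeakDual.toStrongDual x) (f t) = t ∨
      (WeakDual.toStrongDual x) (f t) = -t := by
    intro t
    have hev : ∀ᶠ n in atTop, ψ n (f t) ∈ ({t, -t} : Set ℝ) := by
      filter_upwards [eventually_ge_atTop ⌈|t|⌉₊] with n hn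
      have h1 : |t| ≤ (n + 1 : ℝ) := by
        calc |t| ≤ (⌈|t|⌉₊ : ℝ) := Nat.le_ceil _
          _ ≤ (n : ℝ) := by exact_mod_cast hn
          _ ≤ (n + 1 : ℝ) := by linarith
      rcases hφn2 n t h1 with h | h
      · exact Set.mem_insert_iff.mpr (Or.inl h)
      · exact Set.mem_insert_of_mem _ h
    have hcl' : MapClusterPt (x (f t)) atTop (fun n => ψ n (f t)) :=
      hcl.continuousAt_comp ((WeakDual.eval_continuous (f t)).continuousAt)
    have hcp : ClusterPt (x (f t)) (𝓟 ({t, -t} : Set ℝ)) :=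
      hcl'.clusterPt.mono (le_principal_iff.mpr (mem_map.mpr hev))
    have hmemS : x (f t) ∈ closure ({t, -t} : Set ℝ) := mem_closure_iff_clusterPt.mpr hcp
    rw [((Set.finite_singleton (-t)).insert t).isClosed.closure_eq] at hmemS
    exact hmemS
  refine ⟨WeakDual.toStrongDual x, ?_, hprop⟩
  have hle : ‖WeakDual.toStrongDual x‖ ≤ 1 := by
    simpa [mem_closedBall, dist_zero_right] using hx
  have hge : (1:ℝ) ≤ ‖WeakDual.toStrongDual x‖ := by
    have h1 : |(WeakDual.toStrongDual x) (f 1)| = 1 := by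
      rcases hprop 1 with h | h <;> rw [h] <;> norm_num
    have h2 : |(WeakDual.toStrongDual x) (f 1)| ≤ ‖WeakDual.toStrongDual x‖ * ‖f 1‖ :=
      (WeakDual.toStrongDual x).le_opNorm _
    rw [phase_norm hf 1] at h2
    simp only [abs_one, mul_one] at h2
    linarith
  linarith
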